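/- arXiv:2005.09802 — 5 statements merged into one kernel-verified Lean document; each statement's English description precedes it below -/
import Mathlib

section
/- Let X and Y be real random variables with |X| <= C_1 and |Y| <= C_2 almost surely, and let A be an event with P(A) > 0 such that conditional on A, X and Y are uncorrelated (E[XY | A] = E[X|A] E[Y|A]). Then |Cov(X,Y)| <= 4 C_1 C_2 P(A^c). -/
open MeasureTheory ProbabilityTheory

/-- If `|X| ≤ C₁` and `|Y| ≤ C₂` a.s., and conditional on an event `A`
the variables `X` and `Y` are uncorrelated, then `|Cov(X,Y)| ≤ 4 C₁ C₂ P(Aᶜ)`. -/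
theorem stmt_9 {Ω : Type*} [MeasurableSpace Ω] (μ : Measure Ω) [IsProbabilityMeasure μ]
    (X Y : Ω → ℝ) (hX : Measurable X) (hY : Measurable Y)
    (C₁ C₂ : ℝ)
    (hbX : ∀ᵐ ω ∂μ, |X ω| ≤ C₁) (hbY : ∀ᵐ ω ∂μ, |Y ω| ≤ C₂)
    (A : Set Ω) (hA : MeasurableSet A) (hApos : μ A ≠ 0)
    (huncorr : ∫ ω, X ω * Y ω ∂(μ[|A])
      = (∫ ω, X ω ∂(μ[|A])) * (∫ ω, Y ω ∂(μ[|A]))) :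
    |(∫ ω, X ω * Y ω ∂μ) - (∫ ω, X ω ∂μ) * (∫ ω, Y ω ∂μ)|
      ≤ 4 * C₁ * C₂ * (μ Aᶜ).toReal := by
  -- nonnegativity of the bounds
  obtain ⟨ω₀, hω1, hω2⟩ := (hbX.and hbY).exists
  have hC₁ : 0 ≤ C₁ := le_trans (abs_nonneg _) hω1
  have hC₂ : 0 ≤ C₂ := le_trans (abs_nonneg _) hω2
  -- integrability
  have hXint : Integrable X μ :=
    (integrable_const C₁).mono' hX.aestronglyMeasurable hbX
  have hYint : Integrable Y μ :=
    (integrable_const C₂).mono' hY.aestronglyMeasurable hbY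
  have hbXY : ∀ᵐ ω ∂μ, ‖X ω * Y ω‖ ≤ C₁ * C₂ := by
    filter_upwards [hbX, hbY] with ω h1 h2
    rw [Real.norm_eq_abs, abs_mul]
    exact mul_le_mul h1 h2 (abs_nonneg _) hC₁
  have hXYint : Integrable (fun ω => X ω * Y ω) μ :=
    (integrable_const (C₁ * C₂)).mono' (hX.mul hY).aestronglyMeasurable hbXY
  -- notation
  set p : ℝ := (μ A).toReal with hp
  set q : ℝ := (μ Aᶜ).toReal with hq
  have hpq : p + q = 1 := by
    rw [hp, hq, ← ENNReal.toReal_add (measure_ne_top μ A) (measure_ne_top μ Aᶜ),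
      measure_add_measure_compl hA]
    simp
  have hppos : 0 < p := ENNReal.toReal_pos hApos (measure_ne_top μ A)
  have hqnn : 0 ≤ q := ENNReal.toReal_nonneg
  -- conditional integrals
  have hcond : ∀ f : Ω → ℝ, ∫ ω, f ω ∂(μ[|A]) = p⁻¹ * ∫ ω in A, f ω ∂μ := by
    intro f
    rw [ProbabilityTheory.cond, integral_smul_measure, smul_eq_mul,
      ENNReal.toReal_inv, hp]
  set a : ℝ := ∫ ω in A, X ω ∂μ with ha
  set b : ℝ := ∫ ω in Aᶜ, X ω ∂μ with hb
  set c : ℝ := ∫ ω in A, Y ω ∂μ with hc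
  set d : ℝ := ∫ ω in Aᶜ, Y ω ∂μ with hd
  set m : ℝ := ∫ ω in A, X ω * Y ω ∂μ with hm
  set n : ℝ := ∫ ω in Aᶜ, X ω * Y ω ∂μ with hn
  rw [hcond, hcond, hcond] at huncorr
  have hpne : p ≠ 0 := ne_of_gt hppos
  have hmac : m * p = a * c := by
    have h := huncorr
    field_simp at h
    rw [← ha, ← hc, ← hm] at h
    exact mul_right_cancel₀ hpne (by linear_combination p * h)
  -- a.e. bounds for set integrals
  have hbound : ∀ (s : Set Ω) (f : Ω → ℝ) (C : ℝ), Integrable f μ →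
      (∀ᵐ ω ∂μ, ‖f ω‖ ≤ C) → |∫ ω in s, f ω ∂μ| ≤ C * (μ s).toReal := by
    intro s f C hint hbf
    calc |∫ ω in s, f ω ∂μ| = ‖∫ ω in s, f ω ∂μ‖ := rfl
      _ ≤ C * (μ s).toReal := by
        have := norm_integral_le_of_norm_le_const (μ := μ.restrict s)
          (ae_restrict_of_ae hbf)
        simpa [Measure.real] using this
  have hbX' : ∀ᵐ ω ∂μ, ‖X ω‖ ≤ C₁ := hbX
  have hbY' : ∀ᵐ ω ∂μ, ‖Y ω‖ ≤ C₂ := hbY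
  have hba : |a| ≤ C₁ * p := hbound A X C₁ hXint hbX'
  have hbb : |b| ≤ C₁ * q := hbound Aᶜ X C₁ hXint hbX'
  have hbc : |c| ≤ C₂ * p := hbound A Y C₂ hYint hbY'
  have hbd : |d| ≤ C₂ * q := hbound Aᶜ Y C₂ hYint hbY'
  have hbn : |n| ≤ C₁ * C₂ * q := hbound Aᶜ _ (C₁ * C₂) hXYint hbXY
  -- split integrals
  have hsX : (∫ ω, X ω ∂μ) = a + b := by
    rw [ha, hb, integral_add_compl hA hXint]
  have hsY : (∫ ω, Y ω ∂μ) = c + d := by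
    rw [hc, hd, integral_add_compl hA hYint]
  have hsXY : (∫ ω, X ω * Y ω ∂μ) = m + n := by
    rw [hm, hn, integral_add_compl hA hXYint]
  rw [hsX, hsY, hsXY]
  -- introduce a' = a / p
  set a' : ℝ := a / p with ha'
  have haa : a = a' * p := by rw [ha', div_mul_cancel₀ a hpne]
  have hm' : m = a' * c := by
    have : m * p = a' * p * c := by rw [← haa]; exact hmac
    field_simp at this
    nlinarith [this]
  have hba' : |a'| ≤ C₁ := by
    rw [ha', abs_div, abs_of_pos hppos, div_le_iff₀ hppos]
    exact hba
  clear_value a' p q a b c d m n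
  have key : m + n - (a + b) * (c + d) = a' * c * q + n - a' * p * d - b * c - b * d := by
    rw [hm', haa]
    have : q = 1 - p := by linarith
    rw [this]; ring
  rw [key]
  have tri : |a' * c * q + n - a' * p * d - b * c - b * d|
      ≤ |a' * c * q| + |n| + |a' * p * d| + |b * c| + |b * d| := by
    calc |a' * c * q + n - a' * p * d - b * c - b * d|
        ≤ |a' * c * q + n - a' * p * d - b * c| + |b * d| := abs_sub _ _
      _ ≤ |a' * c * q + n - a' * p * d| + |b * c| + |b * d| := by
          gcongr; exact abs_sub _ _
      _ ≤ |a' * c * q + n| + |a' * p * d| + |b * c| + |b * d| := by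
          gcongr; exact abs_sub _ _
      _ ≤ |a' * c * q| + |n| + |a' * p * d| + |b * c| + |b * d| := by
          gcongr; exact abs_add_le _ _
  refine tri.trans ?_
  have h1 : |a' * c * q| ≤ C₁ * (C₂ * p) * q := by
    rw [abs_mul, abs_mul, abs_of_nonneg hqnn]
    exact mul_le_mul_of_nonneg_right
      (mul_le_mul hba' hbc (abs_nonneg _) hC₁) hqnn
  have h2 : |a' * p * d| ≤ C₁ * p * (C₂ * q) := by
    rw [abs_mul, abs_mul, abs_of_pos hppos]
    exact mul_le_mul (mul_le_mul_of_nonneg_right hba' hppos.le) hbd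
      (abs_nonneg _) (mul_nonneg hC₁ hppos.le)
  have h3 : |b * c| ≤ C₁ * q * (C₂ * p) := by
    rw [abs_mul]
    exact mul_le_mul hbb hbc (abs_nonneg _) (mul_nonneg hC₁ hqnn)
  have h4 : |b * d| ≤ C₁ * q * (C₂ * q) := by
    rw [abs_mul]
    exact mul_le_mul hbb hbd (abs_nonneg _) (mul_nonneg hC₁ hqnn)
  have hfin : C₁ * (C₂ * p) * q + C₁ * C₂ * q + C₁ * p * (C₂ * q)
      + C₁ * q * (C₂ * p) + C₁ * q * (C₂ * q) ≤ 4 * C₁ * C₂ * q := by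
    have h0 : 0 ≤ C₁ * C₂ * q * q :=
      mul_nonneg (mul_nonneg (mul_nonneg hC₁ hC₂) hqnn) hqnn
    have hid : 4 * C₁ * C₂ * q - (C₁ * (C₂ * p) * q + C₁ * C₂ * q + C₁ * p * (C₂ * q)
        + C₁ * q * (C₂ * p) + C₁ * q * (C₂ * q)) = 2 * (C₁ * C₂ * q * q) := by
      have h1pq : q = 1 - p := by linarith
      rw [h1pq]; ring
    linarith [h0, hid]
  linarith [h1, h2, h3, h4, hbn, hfin]
end

section
/- Let X = sum_{i=1}^n X_i be a sum of non-negative random variables with E[X] > 0. Let I be a random index independent mechanism with P(I = i) = E[X_i] / E[X], and let X* = sum_j X_j' where conditional on I = i, X_i' has the size-bias distribution of X_i and the conditional law of (X_1',...,X_n') given I = i and X_i' = x equals the conditional law of (X_1,...,X_n) given X_i = x. Then X* has the size-bias distribution of X, i.e., P(X* = x) = x P(X = x) / E[X] for all x. -/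
open MeasureTheory

/-- size-bias coupling for sums. Let `μ` be the joint law of the non-negative
random variables `(X₁,...,Xₙ)`, with `m = E[∑ Xᵢ] > 0`. Let `ν` be the joint law of
`(I, (X₁',...,Xₙ'))` where `P(I = i) = E[Xᵢ]/m`, conditional on `I = i` the variable `Xᵢ'`
is size-biased, and the conditional law of `(X₁',...,Xₙ')` given `I = i, Xᵢ' = x` equals
the conditional law of `(X₁,...,Xₙ)` given `Xᵢ = x`.  These hypotheses combine into the
identity `P(I = i, X' ∈ A) · m = E[Xᵢ 1_{X ∈ A}]` for all measurable `A`.  Then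
`X* = ∑ Xᵢ'` has the size-bias distribution of `X = ∑ Xᵢ`:
`P(X* = x) · m = x · P(X = x)` for every `x`. -/
theorem stmt_10 (n : ℕ)
    (μ : Measure (Fin n → ℝ)) [IsProbabilityMeasure μ]
    (ν : Measure (Fin n × (Fin n → ℝ))) [IsProbabilityMeasure ν]
    (hnonneg : ∀ᵐ f ∂μ, ∀ i, 0 ≤ f i)
    (m : ℝ) (hm : 0 < m)
    (hmean : ∫ f, (∑ i, f i) ∂μ = m)
    (hcoupling : ∀ (i : Fin n) (A : Set (Fin n → ℝ)), MeasurableSet A →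
      (ν {p | p.1 = i ∧ p.2 ∈ A}).toReal * m = ∫ f in A, f i ∂μ) :
    ∀ x : ℝ, (ν {p | (∑ i, p.2 i) = x}).toReal * m
      = x * (μ {f | (∑ i, f i) = x}).toReal := by
  intro x
  set A : Set (Fin n → ℝ) := {f | (∑ i, f i) = x} with hA
  have hmeasSum : Measurable fun f : Fin n → ℝ => ∑ i, f i := by
    exact Finset.measurable_sum _ (fun i _ => measurable_pi_apply i)
  have hAmeas : MeasurableSet A := hmeasSum (measurableSet_singleton x)
  -- the ν-set splits as a disjoint union over i
  have hsplit : {p : Fin n × (Fin n → ℝ) | (∑ i, p.2 i) = x}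
      = ⋃ i, {p : Fin n × (Fin n → ℝ) | p.1 = i ∧ p.2 ∈ A} := by
    ext p
    simp only [Set.mem_setOf_eq, Set.mem_iUnion, hA]
    constructor
    · intro h; exact ⟨p.1, rfl, h⟩
    · rintro ⟨i, -, h⟩; exact h
  have hSmeas : ∀ i : Fin n,
      MeasurableSet {p : Fin n × (Fin n → ℝ) | p.1 = i ∧ p.2 ∈ A} := by
    intro i
    exact (measurable_fst (measurableSet_singleton i)).inter
      (measurable_snd hAmeas)
  have hdisj : Pairwise (Function.onFun Disjoint
      fun i => {p : Fin n × (Fin n → ℝ) | p.1 = i ∧ p.2 ∈ A}) := by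
    intro i j hij
    refine Set.disjoint_left.2 ?_
    rintro p ⟨hpi, -⟩ ⟨hpj, -⟩
    exact hij (hpi ▸ hpj ▸ rfl)
  have hνsum : ν {p : Fin n × (Fin n → ℝ) | (∑ i, p.2 i) = x}
      = ∑ i, ν {p : Fin n × (Fin n → ℝ) | p.1 = i ∧ p.2 ∈ A} := by
    rw [hsplit, measure_iUnion hdisj hSmeas, tsum_fintype]
  -- integrability of each f i on A
  have hinteg : ∀ i : Fin n, IntegrableOn (fun f => f i) A μ := by
    intro i
    refine Integrable.mono' (integrable_const |x|) ?_ ?_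
    · exact (measurable_pi_apply i).aestronglyMeasurable
    · have h1 : ∀ᵐ f ∂(μ.restrict A), ∀ j, 0 ≤ f j :=
        ae_restrict_of_ae hnonneg
      have h2 : ∀ᵐ f ∂(μ.restrict A), f ∈ A :=
        ae_restrict_mem hAmeas
      filter_upwards [h1, h2] with f h1 h2
      rw [Real.norm_eq_abs, abs_of_nonneg (h1 i)]
      calc f i ≤ ∑ j, f j := Finset.single_le_sum (fun j _ => h1 j) (Finset.mem_univ i)
        _ = x := h2
        _ ≤ |x| := le_abs_self x
  -- finiteness
  have hfin : ∀ i : Fin n,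
      ν {p : Fin n × (Fin n → ℝ) | p.1 = i ∧ p.2 ∈ A} ≠ ⊤ :=
    fun i => measure_ne_top ν _
  calc (ν {p : Fin n × (Fin n → ℝ) | (∑ i, p.2 i) = x}).toReal * m
      = (∑ i, ν {p : Fin n × (Fin n → ℝ) | p.1 = i ∧ p.2 ∈ A}).toReal * m := by
        rw [hνsum]
    _ = ∑ i, (ν {p : Fin n × (Fin n → ℝ) | p.1 = i ∧ p.2 ∈ A}).toReal * m := by
        rw [ENNReal.toReal_sum (fun i _ => hfin i), Finset.sum_mul]
    _ = ∑ i, ∫ f in A, f i ∂μ := by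
        exact Finset.sum_congr rfl fun i _ => hcoupling i A hAmeas
    _ = ∫ f in A, (∑ i, f i) ∂μ := (integral_finset_sum _ (fun i _ => hinteg i)).symm
    _ = ∫ _ in A, x ∂μ := by
        refine setIntegral_congr_fun hAmeas fun f hf => hf
    _ = x * (μ A).toReal := by
        rw [setIntegral_const, smul_eq_mul, mul_comm]; rfl
end

section
/- Let w be Mallows distributed on S_n with parameter q in (0,1], let C be a subset of [n], and let (a_i)_{i in C} be distinct elements of [n]. Let w' be the unique permutation with w'(i) = a_i for i in C and w'(i) < w'(j) for all i < j not in C. Then P(w(i) = a_i for all i in C) <= q^{l(w')} [n - |C|]_q! / [n]_q!. -/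
/-- Number of inversions of a permutation of `Fin n`. -/
def invCount (n : ℕ) (w : Equiv.Perm (Fin n)) : ℕ :=
  (Finset.univ.filter (fun p : Fin n × Fin n => p.1 < p.2 ∧ w p.2 < w p.1)).card

/-- The q-factorial `[m]_q! = ∏_{i=1}^m (1 + q + ⋯ + q^{i-1})`. -/
noncomputable def qFactorial (q : ℝ) (m : ℕ) : ℝ :=
  ∏ i ∈ Finset.Icc 1 m, (∑ j ∈ Finset.range i, q ^ j)

/-- The Mallows probability of `w`: `q^{l(w)} / [n]_q!`. -/
noncomputable def mallows (q : ℝ) (n : ℕ) (w : Equiv.Perm (Fin n)) : ℝ :=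
  q ^ invCount n w / qFactorial q n

/-- Number of descents of a permutation of `Fin n`: positions `i` (0-based) with a
successor `j = i+1` such that `w j < w i`. -/
def desCount (n : ℕ) (w : Equiv.Perm (Fin n)) : ℕ :=
  (Finset.univ.filter
    (fun p : Fin n × Fin n => (p.2 : ℕ) = (p.1 : ℕ) + 1 ∧ w p.2 < w p.1)).card


namespace Stmt11Aux
open Finset

variable {n : ℕ}

/-- Lehmer-type code of `w` relative to the complement of `C`. -/
def icode (C : Finset (Fin n)) (w : Equiv.Perm (Fin n)) : Fin n → ℕ :=
  fun i => if i ∈ C then 0 else (Cᶜ.filter (fun j => i < j ∧ w j < w i)).card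

lemma invCount_eq_double (w : Equiv.Perm (Fin n)) :
    invCount n w = ∑ i : Fin n, ∑ j : Fin n, if i < j ∧ w j < w i then 1 else 0 := by
  rw [invCount, card_filter, Fintype.sum_prod_type]

lemma invCount_decomp (C : Finset (Fin n)) (w : Equiv.Perm (Fin n)) :
    invCount n w =
      ((∑ i ∈ C, ∑ j ∈ C, if i < j ∧ w j < w i then 1 else 0)
        + ∑ c ∈ C, ((Cᶜ.filter fun j => c < j ∧ w j < w c).card
            + (Cᶜ.filter fun j => j < c ∧ w c < w j).card))
      + ∑ i : Fin n, icode C w i := by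
  rw [invCount_eq_double]
  have key : ∑ i : Fin n, ∑ j : Fin n, (if i < j ∧ w j < w i then 1 else 0)
      = ((∑ i ∈ C, ∑ j ∈ C, if i < j ∧ w j < w i then 1 else 0)
          + ∑ i ∈ C, ∑ j ∈ Cᶜ, if i < j ∧ w j < w i then 1 else 0)
        + ((∑ i ∈ Cᶜ, ∑ j ∈ C, if i < j ∧ w j < w i then 1 else 0)
          + ∑ i ∈ Cᶜ, ∑ j ∈ Cᶜ, if i < j ∧ w j < w i then 1 else 0) := by
    rw [← Finset.sum_add_sum_compl C (fun i => ∑ j : Fin n, if i < j ∧ w j < w i then (1:ℕ) else 0)]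
    congr 1
    · rw [← Finset.sum_add_distrib]
      exact Finset.sum_congr rfl fun i _ =>
        (Finset.sum_add_sum_compl C (fun j => if i < j ∧ w j < w i then (1:ℕ) else 0)).symm
    · rw [← Finset.sum_add_distrib]
      exact Finset.sum_congr rfl fun i _ =>
        (Finset.sum_add_sum_compl C (fun j => if i < j ∧ w j < w i then (1:ℕ) else 0)).symm
  rw [key]
  have h2 : ∑ i ∈ C, ∑ j ∈ Cᶜ, (if i < j ∧ w j < w i then (1:ℕ) else 0)
      = ∑ c ∈ C, (Cᶜ.filter fun j => c < j ∧ w j < w c).card :=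
    Finset.sum_congr rfl fun c _ => (card_filter _ _).symm
  have h3 : ∑ i ∈ Cᶜ, ∑ j ∈ C, (if i < j ∧ w j < w i then (1:ℕ) else 0)
      = ∑ c ∈ C, (Cᶜ.filter fun j => j < c ∧ w c < w j).card := by
    rw [Finset.sum_comm]
    exact Finset.sum_congr rfl fun c _ => (card_filter _ _).symm
  have h4 : ∑ i ∈ Cᶜ, ∑ j ∈ Cᶜ, (if i < j ∧ w j < w i then (1:ℕ) else 0)
      = ∑ i : Fin n, icode C w i := by
    rw [← Finset.sum_add_sum_compl C (icode C w)]
    have hC0 : ∑ i ∈ C, icode C w i = 0 :=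
      Finset.sum_eq_zero fun i hi => by simp [icode, hi]
    rw [hC0, zero_add]
    exact Finset.sum_congr rfl fun i hi => by
      rw [icode, if_neg (mem_compl.mp hi), card_filter]
  rw [h2, h3, h4, Finset.sum_add_distrib]
  ring

lemma image_offC (C : Finset (Fin n)) (a : Fin n → Fin n) (w : Equiv.Perm (Fin n))
    (hw : ∀ i ∈ C, w i = a i) (p : Fin n → Prop) [DecidablePred p] :
    (Cᶜ.filter fun j => p (w j)).image w = (C.image a)ᶜ.filter p := by
  ext v
  simp only [mem_image, mem_filter, mem_compl]
  constructor
  · rintro ⟨j, ⟨hj, hpj⟩, rfl⟩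
    refine ⟨?_, hpj⟩
    intro hv
    obtain ⟨c, hc, hac⟩ := hv
    have hcj : w c = w j := by rw [hw c hc, hac]
    exact hj (w.injective hcj ▸ hc)
  · rintro ⟨hv, hpv⟩
    refine ⟨w.symm v, ⟨?_, by simpa using hpv⟩, by simp⟩
    intro hmem
    exact hv ⟨w.symm v, hmem, by rw [← hw _ hmem]; simp⟩

lemma card_offC (C : Finset (Fin n)) (a : Fin n → Fin n) (w : Equiv.Perm (Fin n))
    (hw : ∀ i ∈ C, w i = a i) (p : Fin n → Prop) [DecidablePred p] :
    (Cᶜ.filter fun j => p (w j)).card = ((C.image a)ᶜ.filter p).card := by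
  rw [← image_offC C a w hw p, Finset.card_image_of_injective _ w.injective]

lemma keyA (C : Finset (Fin n)) (a : Fin n → Fin n) (w' : Equiv.Perm (Fin n))
    (hw'1 : ∀ i ∈ C, w' i = a i)
    (hw'2 : ∀ i j : Fin n, i ∉ C → j ∉ C → i < j → w' i < w' j)
    (w : Equiv.Perm (Fin n)) (hw : ∀ i ∈ C, w i = a i) {c : Fin n} (hc : c ∈ C) :
    (Cᶜ.filter fun j => c < j ∧ w' j < w' c).card + (Cᶜ.filter fun j => j < c ∧ w' c < w' j).card
      ≤ (Cᶜ.filter fun j => c < j ∧ w j < w c).card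
        + (Cᶜ.filter fun j => j < c ∧ w c < w j).card := by
  rw [hw c hc, hw'1 c hc]
  -- equation (i) : below-count + above-count on the right part = |Rt|
  have hi : ∀ u : Equiv.Perm (Fin n), (∀ i ∈ C, u i = a i) →
      (Cᶜ.filter fun j => c < j ∧ u j < a c).card + (Cᶜ.filter fun j => c < j ∧ a c < u j).card
        = (Cᶜ.filter fun j => c < j).card := by
    intro u hu
    have hne : ∀ j, j ∈ Cᶜ → u j ≠ a c := by
      intro j hj hj2
      have : u j = u c := by rw [hj2, hu c hc]
      exact (mem_compl.mp hj) (u.injective this ▸ hc)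
    rw [← filter_filter, ← filter_filter]
    have he : (Cᶜ.filter fun j => c < j).filter (fun j => a c < u j)
        = (Cᶜ.filter fun j => c < j).filter (fun j => ¬ u j < a c) := by
      apply filter_congr
      intro j hj
      have hnej := hne j (mem_of_mem_filter j hj)
      constructor
      · exact fun h1 h2 => absurd (h2.trans h1) (lt_irrefl _)
      · intro h1
        rcases lt_or_gt_of_ne hnej with h | h
        · exact absurd h h1
        · exact h
    rw [he, card_filter_add_card_filter_not]
  -- equation (ii) : above-count right + above-count left = |Svals ∩ above|
  have hii : ∀ u : Equiv.Perm (Fin n), (∀ i ∈ C, u i = a i) →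
      (Cᶜ.filter fun j => c < j ∧ a c < u j).card + (Cᶜ.filter fun j => j < c ∧ a c < u j).card
        = ((C.image a)ᶜ.filter fun v => a c < v).card := by
    intro u hu
    rw [← card_offC C a u hu (fun v => a c < v)]
    have e1 : (Cᶜ.filter fun j => c < j ∧ a c < u j)
        = (Cᶜ.filter fun j => a c < u j).filter (fun j => c < j) := by
      rw [filter_filter]
      apply filter_congr
      intro j _
      exact ⟨fun h => ⟨h.2, h.1⟩, fun h => ⟨h.2, h.1⟩⟩
    have e2 : (Cᶜ.filter fun j => j < c ∧ a c < u j)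
        = (Cᶜ.filter fun j => a c < u j).filter (fun j => ¬ c < j) := by
      rw [filter_filter]
      apply filter_congr
      intro j hj
      have hjc : j ≠ c := fun h => (mem_compl.mp hj) (h ▸ hc)
      constructor
      · exact fun h => ⟨h.2, fun h2 => absurd (h.1.trans h2) (lt_irrefl _)⟩
      · intro h
        refine ⟨(lt_or_gt_of_ne hjc).resolve_right h.2, h.1⟩
    rw [e1, e2, card_filter_add_card_filter_not]
  -- the extremal property of w' : it maximizes the above-count on the right part
  have hXle : (Cᶜ.filter fun j => c < j ∧ a c < w j).card
      ≤ (Cᶜ.filter fun j => c < j ∧ a c < w' j).card := by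
    by_cases h : ∃ k ∈ Cᶜ, k < c ∧ a c < w' k
    · obtain ⟨k, hk, hkc, hak⟩ := h
      calc (Cᶜ.filter fun j => c < j ∧ a c < w j).card
          ≤ (Cᶜ.filter fun j => c < j).card := by
            apply card_le_card
            intro j hj
            rw [mem_filter] at hj ⊢
            exact ⟨hj.1, hj.2.1⟩
        _ ≤ (Cᶜ.filter fun j => c < j ∧ a c < w' j).card := by
            apply card_le_card
            intro j hj
            rw [mem_filter] at hj ⊢
            refine ⟨hj.1, hj.2, ?_⟩
            exact hak.trans (hw'2 k j (mem_compl.mp hk) (mem_compl.mp hj.1) (hkc.trans hj.2))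
    · push_neg at h
      have hZ : (Cᶜ.filter fun j => j < c ∧ a c < w' j) = ∅ := by
        apply filter_eq_empty_iff.mpr
        intro j hj hcontra
        exact absurd hcontra.2 (not_lt.mpr (h j hj hcontra.1))
      have h1 := hii w' hw'1
      have h2 := hii w hw
      rw [hZ] at h1
      simp only [card_empty, add_zero] at h1
      omega
  have e1 := hi w hw
  have e2 := hi w' hw'1
  have e3 := hii w hw
  have e4 := hii w' hw'1
  omega

lemma T4zero (C : Finset (Fin n)) (w' : Equiv.Perm (Fin n))
    (hw'2 : ∀ i j : Fin n, i ∉ C → j ∉ C → i < j → w' i < w' j) :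
    ∑ i : Fin n, icode C w' i = 0 := by
  apply Finset.sum_eq_zero
  intro i _
  rw [icode]
  by_cases hi : i ∈ C
  · rw [if_pos hi]
  · rw [if_neg hi]
    rw [card_eq_zero, filter_eq_empty_iff]
    intro j hj hcon
    exact absurd hcon.2 (asymm (hw'2 i j hi (mem_compl.mp hj) hcon.1))

lemma main_ineq (C : Finset (Fin n)) (a : Fin n → Fin n) (w' : Equiv.Perm (Fin n))
    (hw'1 : ∀ i ∈ C, w' i = a i)
    (hw'2 : ∀ i j : Fin n, i ∉ C → j ∉ C → i < j → w' i < w' j)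
    (w : Equiv.Perm (Fin n)) (hw : ∀ i ∈ C, w i = a i) :
    invCount n w' + ∑ i : Fin n, icode C w i ≤ invCount n w := by
  have d1 := invCount_decomp C w
  have d2 := invCount_decomp C w'
  have hT1 : (∑ i ∈ C, ∑ j ∈ C, if i < j ∧ w' j < w' i then (1:ℕ) else 0)
      = ∑ i ∈ C, ∑ j ∈ C, if i < j ∧ w j < w i then (1:ℕ) else 0 := by
    apply Finset.sum_congr rfl
    intro i hi
    apply Finset.sum_congr rfl
    intro j hj
    simp only [hw i hi, hw j hj, hw'1 i hi, hw'1 j hj]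
  have hM : ∑ c ∈ C, ((Cᶜ.filter fun j => c < j ∧ w' j < w' c).card
        + (Cᶜ.filter fun j => j < c ∧ w' c < w' j).card)
      ≤ ∑ c ∈ C, ((Cᶜ.filter fun j => c < j ∧ w j < w c).card
        + (Cᶜ.filter fun j => j < c ∧ w c < w j).card) :=
    Finset.sum_le_sum fun c hc => keyA C a w' hw'1 hw'2 w hw hc
  have hT4 := T4zero C w' hw'2
  omega

lemma rank_inj {α : Type*} [LinearOrder α] [DecidableEq α] (R : Finset α) {x y : α}
    (hx : x ∈ R) (hy : y ∈ R)
    (h : (R.filter (· < x)).card = (R.filter (· < y)).card) : x = y := by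
  rcases lt_trichotomy x y with h1 | h1 | h1
  · exfalso
    have hsub : R.filter (· < x) ⊆ R.filter (· < y) := by
      intro z hz
      rw [mem_filter] at hz ⊢
      exact ⟨hz.1, hz.2.trans h1⟩
    have hss : R.filter (· < x) ⊂ R.filter (· < y) :=
      (Finset.ssubset_iff_of_subset hsub).mpr
        ⟨x, mem_filter.mpr ⟨hx, h1⟩, fun hmem => absurd (mem_filter.mp hmem).2 (lt_irrefl _)⟩
    exact absurd h (Nat.ne_of_lt (card_lt_card hss))
  · exact h1
  · exfalso
    have hsub : R.filter (· < y) ⊆ R.filter (· < x) := by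
      intro z hz
      rw [mem_filter] at hz ⊢
      exact ⟨hz.1, hz.2.trans h1⟩
    have hss : R.filter (· < y) ⊂ R.filter (· < x) :=
      (Finset.ssubset_iff_of_subset hsub).mpr
        ⟨y, mem_filter.mpr ⟨hy, h1⟩, fun hmem => absurd (mem_filter.mp hmem).2 (lt_irrefl _)⟩
    exact absurd h (Nat.ne_of_lt (card_lt_card hss)).symm

lemma mem_image_perm (S : Finset (Fin n)) (σ : Equiv.Perm (Fin n)) (v : Fin n) :
    v ∈ S.image σ ↔ σ.symm v ∈ S := by
  rw [mem_image]
  constructor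
  · rintro ⟨j, hj, rfl⟩; simpa using hj
  · intro h; exact ⟨σ.symm v, h, by simp⟩

lemma icode_inj (C : Finset (Fin n)) (a : Fin n → Fin n)
    (w u : Equiv.Perm (Fin n)) (hw : ∀ i ∈ C, w i = a i) (hu : ∀ i ∈ C, u i = a i)
    (h : icode C w = icode C u) : w = u := by
  suffices H : ∀ N : ℕ, ∀ i : Fin n, (i : ℕ) ≤ N → w i = u i by
    exact Equiv.ext fun i => H i i le_rfl
  intro N
  induction N using Nat.strong_induction_on with
  | _ N IH =>
    intro i hiN
    by_cases hiC : i ∈ C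
    · rw [hw i hiC, hu i hiC]
    · have IH' : ∀ j : Fin n, j < i → w j = u j := by
        intro j hj
        have : (j : ℕ) < N := lt_of_lt_of_le hj hiN
        exact IH j this j le_rfl
      set U : Finset (Fin n) := C ∪ Cᶜ.filter (· < i) with hU
      set V : Finset (Fin n) := insert i (Cᶜ.filter (fun j => i < j)) with hV
      have hVU : ∀ j : Fin n, j ∈ V ↔ j ∉ U := by
        intro j
        simp only [hV, hU, mem_insert, mem_filter, mem_compl, mem_union, not_or, not_and]
        constructor
        · rintro (rfl | ⟨hj1, hj2⟩)
          · exact ⟨hiC, fun _ => lt_irrefl j⟩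
          · exact ⟨hj1, fun _ h2 => absurd (hj2.trans h2) (lt_irrefl _)⟩
        · rintro ⟨hj1, hj2⟩
          rcases lt_trichotomy i j with h1 | h1 | h1
          · exact Or.inr ⟨hj1, h1⟩
          · exact Or.inl h1.symm
          · exact absurd h1 (hj2 hj1)
      have himg : U.image w = U.image u := by
        apply Finset.image_congr
        intro j hj
        rcases mem_union.mp hj with hjC | hjf
        · rw [hw j hjC, hu j hjC]
        · exact IH' j (mem_filter.mp hjf).2
      have hRw : (U.image w)ᶜ = V.image w := by
        ext v
        rw [mem_compl, mem_image_perm, mem_image_perm, hVU]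
      have hRu : (U.image w)ᶜ = V.image u := by
        rw [himg]
        ext v
        rw [mem_compl, mem_image_perm, mem_image_perm, hVU]
      set R : Finset (Fin n) := (U.image w)ᶜ
      have hwiR : w i ∈ R := by
        rw [hRw]; exact mem_image_of_mem w (mem_insert_self i _)
      have huiR : u i ∈ R := by
        rw [hRu]; exact mem_image_of_mem u (mem_insert_self i _)
      have hcard : ∀ σ : Equiv.Perm (Fin n), (R = V.image σ) →
          (R.filter (· < σ i)).card = icode C σ i := by
        intro σ hσ
        rw [hσ, filter_image, card_image_of_injective _ σ.injective, hV, filter_insert,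
          if_neg (lt_irrefl (σ i)), filter_filter, icode, if_neg hiC]
      have h1 := hcard w hRw
      have h2 := hcard u hRu
      apply rank_inj R hwiR huiR
      rw [h1, h2, h]

lemma icode_lt (C : Finset (Fin n)) (w : Equiv.Perm (Fin n)) (i : Fin n) :
    icode C w i < (if i ∈ C then 1 else (Cᶜ.filter (fun j => i < j)).card + 1) := by
  rw [icode]
  by_cases hi : i ∈ C
  · simp [hi]
  · rw [if_neg hi, if_neg hi, Nat.lt_succ_iff]
    apply card_le_card
    intro j hj
    rw [mem_filter] at hj ⊢
    exact ⟨hj.1, hj.2.1⟩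

lemma qFactorial_pos {q : ℝ} (hq0 : 0 < q) (m : ℕ) : 0 < qFactorial q m := by
  rw [qFactorial]
  apply Finset.prod_pos
  intro i hi
  apply Finset.sum_pos (fun j _ => pow_pos hq0 j)
  exact ⟨0, mem_range.mpr (mem_Icc.mp hi).1⟩

set_option maxHeartbeats 1000000 in
lemma prod_bnd_eq (C : Finset (Fin n)) (q : ℝ) :
    ∏ i : Fin n, ∑ j ∈ Finset.range (if i ∈ C then 1 else (Cᶜ.filter (fun j => i < j)).card + 1), q ^ j
      = qFactorial q (n - C.card) := by
  set m := n - C.card with hm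
  have hmc : (Cᶜ : Finset (Fin n)).card = m := by
    rw [card_compl, Fintype.card_fin]
  rw [← Finset.prod_mul_prod_compl C]
  have h1 : ∏ i ∈ C, (∑ j ∈ Finset.range (if i ∈ C then 1 else (Cᶜ.filter (fun j => i < j)).card + 1), q ^ j) = 1 := by
    apply Finset.prod_eq_one
    intro i hi
    simp [hi]
  rw [h1, one_mul]
  have hcongr : ∀ i ∈ Cᶜ,
      (∑ j ∈ Finset.range (if i ∈ C then 1 else (Cᶜ.filter (fun j => i < j)).card + 1), q ^ j)
        = ∑ j ∈ Finset.range ((Cᶜ.filter (fun j => i < j)).card + 1), q ^ j := by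
    intro i hi
    rw [if_neg (mem_compl.mp hi)]
  rw [Finset.prod_congr rfl hcongr]
  set r : Fin n → ℕ := fun i => (Cᶜ.filter (fun j => i < j)).card + 1 with hr
  have hmono : ∀ i ∈ Cᶜ, ∀ i' ∈ Cᶜ, i < i' → r i' < r i := by
    intro i hi i' hi' hlt
    have hss : Cᶜ.filter (fun j => i' < j) ⊂ Cᶜ.filter (fun j => i < j) := by
      apply (Finset.ssubset_iff_of_subset ?_).mpr
      · exact ⟨i', mem_filter.mpr ⟨hi', hlt⟩,
          fun hmem => absurd (mem_filter.mp hmem).2 (lt_irrefl _)⟩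
      · intro z hz
        rw [mem_filter] at hz ⊢
        exact ⟨hz.1, hlt.trans hz.2⟩
    exact Nat.succ_lt_succ (card_lt_card hss)
  have hinj : ∀ x ∈ Cᶜ, ∀ y ∈ Cᶜ, r x = r y → x = y := by
    intro x hx y hy hxy
    by_contra hne
    rcases lt_or_gt_of_ne hne with h | h
    · exact absurd hxy (Nat.ne_of_gt (hmono x hx y hy h))
    · exact absurd hxy (Nat.ne_of_lt (hmono y hy x hx h))
  have hsub : (Cᶜ : Finset (Fin n)).image r ⊆ Finset.Icc 1 m := by
    intro k hk
    obtain ⟨i, hi, rfl⟩ := mem_image.mp hk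
    rw [mem_Icc]
    constructor
    · exact Nat.succ_le_succ (Nat.zero_le _)
    · have hsub2 : Cᶜ.filter (fun j => i < j) ⊆ Cᶜ.erase i := by
        intro j hj
        rw [mem_filter] at hj
        rw [mem_erase]
        exact ⟨Ne.symm (ne_of_lt hj.2), hj.1⟩
      have hle := card_le_card hsub2
      rw [card_erase_of_mem hi, hmc] at hle
      have hri : r i = (Cᶜ.filter (fun j => i < j)).card + 1 := rfl
      have hm1 : 1 ≤ m := by
        rw [← hmc]
        exact card_pos.mpr ⟨i, hi⟩
      omega
  have hcard : ((Cᶜ : Finset (Fin n)).image r).card = (Finset.Icc 1 m).card := by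
    rw [Finset.card_image_of_injOn (fun x hx y hy => hinj x hx y hy), hmc, Nat.card_Icc]
    omega
  have himg : (Cᶜ : Finset (Fin n)).image r = Finset.Icc 1 m :=
    Finset.eq_of_subset_of_card_le hsub (le_of_eq hcard.symm)
  calc ∏ i ∈ Cᶜ, (∑ j ∈ Finset.range (r i), q ^ j)
      = ∏ k ∈ (Cᶜ : Finset (Fin n)).image r, ∑ j ∈ Finset.range k, q ^ j :=
        (Finset.prod_image (f := fun k => ∑ j ∈ Finset.range k, q ^ j) hinj).symm
    _ = qFactorial q m := by rw [himg, qFactorial]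

end Stmt11Aux


open scoped Classical in
/-- Mallows probability upper bound. Let `w` be Mallows distributed on `S_n`
with parameter `0 < q ≤ 1`, `C ⊆ [n]`, and `(aᵢ)_{i ∈ C}` distinct. Let `w'` be the (unique)
permutation with `w' i = aᵢ` on `C` and increasing off `C`. Then
`P(w i = aᵢ for all i ∈ C) ≤ q^{l(w')} [n - |C|]_q! / [n]_q!`. -/
theorem stmt_11 (n : ℕ) (q : ℝ) (hq0 : 0 < q) (hq1 : q ≤ 1)
    (C : Finset (Fin n)) (a : Fin n → Fin n) (ha : Set.InjOn a C)
    (w' : Equiv.Perm (Fin n))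
    (hw'1 : ∀ i ∈ C, w' i = a i)
    (hw'2 : ∀ i j : Fin n, i ∉ C → j ∉ C → i < j → w' i < w' j) :
    ∑ w ∈ Finset.univ.filter (fun w : Equiv.Perm (Fin n) => ∀ i ∈ C, w i = a i),
        mallows q n w
      ≤ q ^ invCount n w' * qFactorial q (n - C.card) / qFactorial q n := by
  classical
  have hQn := Stmt11Aux.qFactorial_pos hq0 n
  set F := Finset.univ.filter (fun w : Equiv.Perm (Fin n) => ∀ i ∈ C, w i = a i) with hF
  have hw_mem : ∀ w ∈ F, ∀ i ∈ C, w i = a i := fun w hw => (Finset.mem_filter.mp hw).2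
  have hstep : ∑ w ∈ F, (q : ℝ) ^ invCount n w
      ≤ q ^ invCount n w' * qFactorial q (n - C.card) := by
    calc ∑ w ∈ F, (q:ℝ) ^ invCount n w
        ≤ ∑ w ∈ F, q ^ invCount n w' * ∏ i : Fin n, q ^ Stmt11Aux.icode C w i := by
          apply Finset.sum_le_sum
          intro w hw
          have hin := Stmt11Aux.main_ineq C a w' hw'1 hw'2 w (hw_mem w hw)
          calc (q:ℝ) ^ invCount n w
              ≤ q ^ (invCount n w' + ∑ i : Fin n, Stmt11Aux.icode C w i) :=
                pow_le_pow_of_le_one hq0.le hq1 hin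
            _ = q ^ invCount n w' * ∏ i : Fin n, q ^ Stmt11Aux.icode C w i := by
                rw [pow_add, Finset.prod_pow_eq_pow_sum]
      _ = q ^ invCount n w' * ∑ w ∈ F, ∏ i : Fin n, q ^ Stmt11Aux.icode C w i := by
          rw [Finset.mul_sum]
      _ ≤ q ^ invCount n w' * qFactorial q (n - C.card) := by
          apply mul_le_mul_of_nonneg_left ?_ (pow_nonneg hq0.le _)
          have hinjF : ∀ x ∈ F, ∀ y ∈ F, Stmt11Aux.icode C x = Stmt11Aux.icode C y → x = y :=
            fun x hx y hy h => Stmt11Aux.icode_inj C a x y (hw_mem x hx) (hw_mem y hy) h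
          calc ∑ w ∈ F, ∏ i : Fin n, q ^ Stmt11Aux.icode C w i
              = ∑ d ∈ F.image (Stmt11Aux.icode C), ∏ i : Fin n, q ^ d i :=
                (Finset.sum_image (f := fun d : Fin n → ℕ => ∏ i : Fin n, q ^ d i) hinjF).symm
            _ ≤ ∑ d ∈ Fintype.piFinset (fun i : Fin n =>
                  Finset.range (if i ∈ C then 1 else (Cᶜ.filter (fun j => i < j)).card + 1)),
                  ∏ i : Fin n, q ^ d i := by
                apply Finset.sum_le_sum_of_subset_of_nonneg
                · intro d hd
                  obtain ⟨w, hwF, rfl⟩ := Finset.mem_image.mp hd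
                  rw [Fintype.mem_piFinset]
                  intro i
                  rw [Finset.mem_range]
                  exact Stmt11Aux.icode_lt C w i
                · intro d _ _
                  exact Finset.prod_nonneg fun i _ => pow_nonneg hq0.le _
            _ = ∏ i : Fin n, ∑ j ∈ Finset.range
                  (if i ∈ C then 1 else (Cᶜ.filter (fun j => i < j)).card + 1), q ^ j :=
                (Finset.prod_univ_sum _ _).symm
            _ = qFactorial q (n - C.card) := Stmt11Aux.prod_bnd_eq C q
  simp only [mallows]
  rw [← Finset.sum_div]
  exact (div_le_div_iff_of_pos_right hQn).mpr hstep
end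

section
/- Let w be Mallows distributed on S_n with parameter 0 < q <= 1. Then for any i in [n-1], P(w(i) > w(i+1)) = q/(1+q), i.e., each descent indicator des_i(w) is Bernoulli with parameter q/(1+q). -/
/-! ### Auxiliary development: the inversion generating function -/

/-- Insert the value `last n` at position `k`; elsewhere follow `e` via `castSucc`. -/
def phi (n : ℕ) (k : Fin (n+1)) (e : Equiv.Perm (Fin n)) : Equiv.Perm (Fin (n+1)) :=
  (finSuccEquiv' k).trans ((Equiv.optionCongr e).trans (finSuccEquiv' (Fin.last n)).symm)

@[simp] lemma phi_at (n : ℕ) (k : Fin (n+1)) (e : Equiv.Perm (Fin n)) :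
    phi n k e k = Fin.last n := by simp [phi]

@[simp] lemma phi_succAbove (n : ℕ) (k : Fin (n+1)) (e : Equiv.Perm (Fin n)) (i : Fin n) :
    phi n k e (k.succAbove i) = Fin.castSucc (e i) := by
  simp [phi, finSuccEquiv'_succAbove, finSuccEquiv'_symm_some, Fin.succAbove_last]

lemma invCount_phi (n : ℕ) (k : Fin (n+1)) (e : Equiv.Perm (Fin n)) :
    invCount (n+1) (phi n k e) = (n - (k : ℕ)) + invCount n e := by
  set w := phi n k e with hw
  have hwk : ∀ x : Fin (n+1), w x = Fin.last n ↔ x = k := by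
    intro x
    constructor
    · intro h; apply w.injective; rw [h, phi_at]
    · intro h; rw [h]; exact phi_at n k e
  unfold invCount
  rw [← Finset.card_filter_add_card_filter_not
    (fun p : Fin (n+1) × Fin (n+1) => p.1 = k)]
  congr 1
  · have : ((Finset.univ.filter
        (fun p : Fin (n+1) × Fin (n+1) => p.1 < p.2 ∧ w p.2 < w p.1)).filter
        (fun p => p.1 = k))
        = (Finset.Ioi k).map ⟨fun b => (k, b), fun a b h => by simpa using h⟩ := by
      ext p
      simp only [Finset.mem_filter, Finset.mem_univ, true_and, Finset.mem_map,
        Finset.mem_Ioi, Function.Embedding.coeFn_mk]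
      constructor
      · rintro ⟨⟨h1, _⟩, rfl⟩
        exact ⟨p.2, h1, rfl⟩
      · rintro ⟨b, hb, rfl⟩
        refine ⟨⟨hb, ?_⟩, rfl⟩
        show w b < phi n k e k
        rw [phi_at]
        rw [Fin.lt_last_iff_ne_last]
        intro hlast
        exact absurd ((hwk b).mp hlast) (ne_of_gt hb)
    rw [this, Finset.card_map, Fin.card_Ioi]
    simp
  · symm
    apply Finset.card_bij
      (fun (p : Fin n × Fin n) _ => ((k.succAbove p.1, k.succAbove p.2) : Fin (n+1) × Fin (n+1)))
    · intro p hp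
      simp only [Finset.mem_filter, Finset.mem_univ, true_and] at hp ⊢
      refine ⟨⟨Fin.succAbove_lt_succAbove_iff.mpr hp.1, ?_⟩, Fin.succAbove_ne k p.1⟩
      rw [phi_succAbove, phi_succAbove]
      exact Fin.castSucc_lt_castSucc_iff.mpr hp.2
    · intro p _ p' _ h
      simp only [Prod.mk.injEq] at h
      exact Prod.ext (k.succAbove_right_injective h.1) (k.succAbove_right_injective h.2)
    · intro p hp
      simp only [Finset.mem_filter, Finset.mem_univ, true_and] at hp
      obtain ⟨⟨h1, h2⟩, hne1⟩ := hp
      have hne2 : p.2 ≠ k := by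
        intro h
        rw [h] at h2
        rw [phi_at] at h2
        exact absurd h2 (Fin.not_lt.mpr (Fin.le_last _))
      obtain ⟨a, ha⟩ := Fin.exists_succAbove_eq hne1
      obtain ⟨b, hb⟩ := Fin.exists_succAbove_eq hne2
      refine ⟨(a, b), ?_, by simp [ha, hb]⟩
      simp only [Finset.mem_filter, Finset.mem_univ, true_and]
      constructor
      · rw [← Fin.succAbove_lt_succAbove_iff (p := k), ha, hb]; exact h1
      · rw [← ha, ← hb, phi_succAbove, phi_succAbove, Fin.castSucc_lt_castSucc_iff] at h2
        exact h2

lemma psi_aux (n : ℕ) (w : Equiv.Perm (Fin (n+1))) (i : Fin n) :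
    w ((w⁻¹ (Fin.last n)).succAbove i) ≠ Fin.last n := by
  intro h
  have := w.injective (h.trans (w.apply_symm_apply (Fin.last n)).symm)
  exact Fin.succAbove_ne _ i this

/-- Remove the value `last n` (at position `w⁻¹ (last n)`) from `w`. -/
noncomputable def psi (n : ℕ) (w : Equiv.Perm (Fin (n+1))) : Equiv.Perm (Fin n) :=
  Equiv.ofBijective
    (fun i => (w ((w⁻¹ (Fin.last n)).succAbove i)).castPred (psi_aux n w i))
    (Finite.injective_iff_bijective.mp (by
      intro a b h
      have h2 := congrArg Fin.castSucc h
      rw [Fin.castSucc_castPred, Fin.castSucc_castPred] at h2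
      exact Fin.succAbove_right_injective (w.injective h2)))

lemma phi_inv_last (n : ℕ) (k : Fin (n+1)) (e : Equiv.Perm (Fin n)) :
    (phi n k e)⁻¹ (Fin.last n) = k := by
  rw [Equiv.Perm.inv_eq_iff_eq, phi_at]

lemma psi_phi (n : ℕ) (k : Fin (n+1)) (e : Equiv.Perm (Fin n)) :
    psi n (phi n k e) = e := by
  ext i
  have : (psi n (phi n k e)) i =
      ((phi n k e) (((phi n k e)⁻¹ (Fin.last n)).succAbove i)).castPred (psi_aux n _ i) :=
    rfl
  rw [this]
  have hk := phi_inv_last n k e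
  simp_rw [hk, phi_succAbove, Fin.castPred_castSucc]

lemma phi_psi (n : ℕ) (w : Equiv.Perm (Fin (n+1))) :
    phi n (w⁻¹ (Fin.last n)) (psi n w) = w := by
  apply Equiv.ext; intro x
  set k := w⁻¹ (Fin.last n) with hk
  rcases eq_or_ne x k with rfl | hx
  · rw [phi_at, hk, Equiv.Perm.coe_inv, Equiv.apply_symm_apply]
  · obtain ⟨i, rfl⟩ := Fin.exists_succAbove_eq (Ne.symm (Ne.symm hx))
    rw [phi_succAbove]
    show Fin.castSucc ((w (k.succAbove i)).castPred (psi_aux n w i)) = _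
    rw [Fin.castSucc_castPred]

/-- The inversion generating function of `S_n` is the `q`-factorial. -/
lemma sum_q_pow_invCount (q : ℝ) (n : ℕ) :
    ∑ w : Equiv.Perm (Fin n), q ^ invCount n w = qFactorial q n := by
  induction n with
  | zero =>
    rw [Finset.sum_eq_single 1]
    · have : invCount 0 1 = 0 := by
        unfold invCount
        simp
      rw [this, pow_zero]
      unfold qFactorial
      simp
    · intro w _ hw
      exact absurd (Subsingleton.elim w 1) hw
    · simp
  | succ n ih =>
    have key : ∑ w : Equiv.Perm (Fin (n+1)), q ^ invCount (n+1) w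
        = ∑ p : Fin (n+1) × Equiv.Perm (Fin n), q ^ ((n - (p.1 : ℕ)) + invCount n p.2) := by
      apply Finset.sum_nbij'
        (fun w => ((w⁻¹ (Fin.last n), psi n w) : Fin (n+1) × Equiv.Perm (Fin n)))
        (fun p => phi n p.1 p.2)
      · intro _ _; exact Finset.mem_univ _
      · intro _ _; exact Finset.mem_univ _
      · intro w _; exact phi_psi n w
      · intro p _
        ext : 1
        · exact phi_inv_last n p.1 p.2
        · exact psi_phi n p.1 p.2
      · intro w _
        conv_lhs => rw [← phi_psi n w]
        rw [invCount_phi]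
    rw [key, Fintype.sum_prod_type]
    simp_rw [pow_add, ← Finset.mul_sum]
    rw [← Finset.sum_mul, ih]
    have hsum : ∑ k : Fin (n+1), q ^ (n - (k : ℕ)) = ∑ j ∈ Finset.range (n+1), q ^ j := by
      rw [Fin.sum_univ_eq_sum_range (fun k => q ^ (n - k))]
      have := Finset.sum_range_reflect (fun j => q ^ j) (n+1)
      simp only [Nat.add_sub_cancel] at this
      exact this
    rw [hsum]
    unfold qFactorial
    rw [Finset.prod_Icc_succ_top (Nat.le_add_left 1 n)]
    ring

/-! ### Auxiliary development: the adjacent-swap involution -/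

lemma swap_adj_lt {n : ℕ} {i j : Fin n} (hij : (j : ℕ) = (i : ℕ) + 1)
    {a b : Fin n} (hab : a < b) (hne : ¬(a = i ∧ b = j)) :
    Equiv.swap i j a < Equiv.swap i j b := by
  have hab' : (a : ℕ) < (b : ℕ) := hab
  rw [Equiv.swap_apply_def, Equiv.swap_apply_def, Fin.lt_def]
  split_ifs <;> simp only [Fin.ext_iff, not_and, Fin.lt_def] at * <;> omega

lemma mem_erase_step {n : ℕ} {i j : Fin n} (hij : (j : ℕ) = (i : ℕ) + 1)
    (u : Equiv.Perm (Fin n)) (p : Fin n × Fin n)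
    (hp : p ∈ (Finset.univ.filter
      (fun p : Fin n × Fin n => p.1 < p.2 ∧ u p.2 < u p.1)).erase (i, j)) :
    (Equiv.swap i j p.1, Equiv.swap i j p.2) ∈ (Finset.univ.filter
      (fun p : Fin n × Fin n => p.1 < p.2 ∧ (u * Equiv.swap i j) p.2
        < (u * Equiv.swap i j) p.1)).erase (i, j) := by
  have hij' : i < j := by rw [Fin.lt_def]; omega
  rw [Finset.mem_erase, Finset.mem_filter] at hp ⊢
  obtain ⟨hne, _, h1, h2⟩ := hp
  have hne' : ¬(p.1 = i ∧ p.2 = j) := by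
    rintro ⟨e1, e2⟩; exact hne (Prod.ext e1 e2)
  have hlt := swap_adj_lt hij h1 hne'
  refine ⟨?_, Finset.mem_univ _, hlt, ?_⟩
  · intro h
    rw [Prod.mk.injEq] at h
    have e1 : p.1 = j := by
      have := congrArg (Equiv.swap i j) h.1
      rwa [Equiv.swap_apply_self, Equiv.swap_apply_left] at this
    have e2 : p.2 = i := by
      have := congrArg (Equiv.swap i j) h.2
      rwa [Equiv.swap_apply_self, Equiv.swap_apply_right] at this
    rw [e1, e2] at h1
    exact absurd h1 (not_lt.mpr (le_of_lt hij'))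
  · show u (Equiv.swap i j (Equiv.swap i j p.2)) < u (Equiv.swap i j (Equiv.swap i j p.1))
    rwa [Equiv.swap_apply_self, Equiv.swap_apply_self]

lemma invCount_mul_swap {n : ℕ} {i j : Fin n} (hij : (j : ℕ) = (i : ℕ) + 1)
    (v : Equiv.Perm (Fin n)) (h : v i < v j) :
    invCount n (v * Equiv.swap i j) = invCount n v + 1 := by
  have hij' : i < j := by rw [Fin.lt_def]; omega
  set s := Equiv.swap i j with hs
  set F := fun u : Equiv.Perm (Fin n) => Finset.univ.filter
    (fun p : Fin n × Fin n => p.1 < p.2 ∧ u p.2 < u p.1) with hF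
  have hmem : (i, j) ∈ F (v * s) := by
    rw [hF]
    simp only [Finset.mem_filter, Finset.mem_univ, true_and]
    refine ⟨hij', ?_⟩
    show v (s j) < v (s i)
    rwa [hs, Equiv.swap_apply_right, Equiv.swap_apply_left]
  have hnmem : (i, j) ∉ F v := by
    rw [hF]
    simp only [Finset.mem_filter, Finset.mem_univ, true_and, not_and]
    intro _
    exact not_lt.mpr (le_of_lt h)
  have hcards : ((F (v * s)).erase (i, j)).card = ((F v).erase (i, j)).card := by
    apply Finset.card_bij' (fun p _ => ((s p.1, s p.2) : Fin n × Fin n))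
      (fun p _ => ((s p.1, s p.2) : Fin n × Fin n))
    · intro p hp
      have := mem_erase_step hij (v * s) p hp
      rwa [mul_assoc, hs, Equiv.swap_mul_self, mul_one] at this
    · intro p hp
      exact mem_erase_step hij v p hp
    · intro p _; simp [hs, Equiv.swap_apply_self]
    · intro p _; simp [hs, Equiv.swap_apply_self]
  show (F (v * s)).card = (F v).card + 1
  rw [← Finset.card_erase_add_one hmem, hcards, Finset.erase_eq_of_notMem hnmem]

/-- For `w` Mallows distributed on `S_n` with parameter `0 < q ≤ 1` and any
position `i` with successor `j` (`j = i + 1`), `P(w i > w j) = q/(1+q)`: the descent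
indicator at `i` is Bernoulli with parameter `q/(1+q)`. -/
theorem stmt_12 (n : ℕ) (q : ℝ) (hq0 : 0 < q) (hq1 : q ≤ 1)
    (i j : Fin n) (hij : (j : ℕ) = (i : ℕ) + 1) :
    ∑ w ∈ Finset.univ.filter (fun w : Equiv.Perm (Fin n) => w j < w i), mallows q n w
      = q / (1 + q) := by
  classical
  have hij' : i < j := by rw [Fin.lt_def]; omega
  have hine : i ≠ j := ne_of_lt hij'
  set s := Equiv.swap i j with hs
  set D := Finset.univ.filter (fun w : Equiv.Perm (Fin n) => w j < w i) with hD
  set A := Finset.univ.filter (fun w : Equiv.Perm (Fin n) => ¬ w j < w i) with hA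
  have hDA : ∑ w ∈ D, q ^ invCount n w = q * ∑ w ∈ A, q ^ invCount n w := by
    rw [Finset.mul_sum]
    apply Finset.sum_nbij' (fun w => w * s) (fun w => w * s)
    · intro w hw
      rw [hD, Finset.mem_filter] at hw
      rw [hA, Finset.mem_filter]
      refine ⟨Finset.mem_univ _, ?_⟩
      show ¬ w (s j) < w (s i)
      rw [hs, Equiv.swap_apply_right, Equiv.swap_apply_left]
      exact not_lt.mpr (le_of_lt hw.2)
    · intro w hw
      rw [hA, Finset.mem_filter] at hw
      rw [hD, Finset.mem_filter]
      refine ⟨Finset.mem_univ _, ?_⟩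
      have hlt : w i < w j :=
        lt_of_le_of_ne (not_lt.mp hw.2) (fun h => hine (w.injective h))
      show w (s j) < w (s i)
      rw [hs, Equiv.swap_apply_right, Equiv.swap_apply_left]
      exact hlt
    · intro w _; rw [hs, mul_assoc, Equiv.swap_mul_self, mul_one]
    · intro w _; rw [hs, mul_assoc, Equiv.swap_mul_self, mul_one]
    · intro w hw
      rw [hD, Finset.mem_filter] at hw
      have hlt : (w * s) i < (w * s) j := by
        show w (s i) < w (s j)
        rw [hs, Equiv.swap_apply_left, Equiv.swap_apply_right]
        exact hw.2
      have hinv := invCount_mul_swap hij (w * s) hlt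
      rw [mul_assoc, hs, Equiv.swap_mul_self, mul_one, ← hs] at hinv
      rw [hinv, pow_succ, mul_comm]
  have htot : (∑ w ∈ D, q ^ invCount n w) + ∑ w ∈ A, q ^ invCount n w = qFactorial q n := by
    rw [hD, hA, Finset.sum_filter_add_sum_filter_not]
    exact sum_q_pow_invCount q n
  have hfac : 0 < qFactorial q n := by
    unfold qFactorial
    apply Finset.prod_pos
    intro m hm
    rw [Finset.mem_Icc] at hm
    apply Finset.sum_pos
    · intro _ _; positivity
    · exact Finset.nonempty_range_iff.mpr (by omega)
  have h1q : (0:ℝ) < 1 + q := by linarith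
  have hms : ∑ w ∈ D, mallows q n w = (∑ w ∈ D, q ^ invCount n w) / qFactorial q n := by
    unfold mallows; rw [Finset.sum_div]
  rw [hms, div_eq_div_iff hfac.ne' h1q.ne']
  linear_combination hDA + q * htot
end

section
/- Let w be Mallows distributed on S_n with parameter 0 < q <= 1. Then for any i in [n], P(|w(i) - i| > 1) <= 2 q^2 (the paper states the slightly weaker intermediate bound sum_{|j-i|>=2} q^{|j-i|}(1-q)/(1-q^n) <= 2q^2 via the pointwise bound P(w(i)=j) <= q^{|i-j|}(1-q)/(1-q^n)). -/
namespace Stmt17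

open Finset Equiv

/-- inversion count of the inverse equals that of the permutation -/
lemma invCount_inv (n : ℕ) (w : Equiv.Perm (Fin n)) : invCount n w⁻¹ = invCount n w := by
  unfold invCount
  apply Finset.card_bij' (fun p _ => (w⁻¹ p.2, w⁻¹ p.1)) (fun p _ => (w p.2, w p.1))
  · intro p hp
    simp only [mem_filter, mem_univ, true_and] at hp ⊢
    exact ⟨hp.2, by simpa using hp.1⟩
  · intro p hp
    simp only [mem_filter, mem_univ, true_and] at hp ⊢
    exact ⟨hp.2, by simpa using hp.1⟩
  · intro p hp; simp
  · intro p hp; simp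

/-- adjacent swap on the right changes the inversion count by at most one (upper bound) -/
lemma invCount_mul_swap_le (n : ℕ) (w : Equiv.Perm (Fin n)) (a b : Fin n)
    (hab : (b : ℕ) = (a : ℕ) + 1) :
    invCount n (w * Equiv.swap a b) ≤ invCount n w + 1 := by
  classical
  unfold invCount
  set s : Equiv.Perm (Fin n) := Equiv.swap a b with hs
  set T := Finset.univ.filter
    (fun p : Fin n × Fin n => p.1 < p.2 ∧ (w * s) p.2 < (w * s) p.1) with hT
  set W := Finset.univ.filter
    (fun p : Fin n × Fin n => p.1 < p.2 ∧ w p.2 < w p.1) with hW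
  have key : (T.erase (a, b)).card ≤ W.card := by
    apply Finset.card_le_card_of_injOn (fun p => (s p.1, s p.2))
    · intro p hp
      rcases Finset.mem_erase.1 hp with ⟨hne, hp⟩
      simp only [hT, mem_filter, mem_univ, true_and] at hp
      simp only [hW, mem_coe, mem_filter, mem_univ, true_and]
      refine ⟨?_, by simpa [Equiv.Perm.mul_apply] using hp.2⟩
      -- s preserves order except on the pair (a,b)
      have hpair : ¬ (p.1 = a ∧ p.2 = b) := by
        intro h; exact hne (by rcases p with ⟨x, y⟩; simp_all)
      rcases p with ⟨x, y⟩
      have hxy : x < y := hp.1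
      simp only at hpair ⊢
      rcases eq_or_ne x a with rfl | hxa
      · have hyb : y ≠ b := fun h => hpair ⟨rfl, h⟩
        rw [hs, Equiv.swap_apply_left, Equiv.swap_apply_of_ne_of_ne (by fin_omega) hyb]
        fin_omega
      · rcases eq_or_ne x b with rfl | hxb
        · rw [hs, Equiv.swap_apply_right,
            Equiv.swap_apply_of_ne_of_ne (by fin_omega) (by fin_omega)]
          fin_omega
        · rw [hs, Equiv.swap_apply_of_ne_of_ne hxa hxb]
          rcases eq_or_ne y a with rfl | hya
          · rw [Equiv.swap_apply_left]; fin_omega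
          · rcases eq_or_ne y b with rfl | hyb
            · rw [Equiv.swap_apply_right]; fin_omega
            · rw [Equiv.swap_apply_of_ne_of_ne hya hyb]; exact hxy
    · intro p _ p' _ h
      simp only [Prod.mk.injEq] at h
      exact Prod.ext (s.injective h.1) (s.injective h.2)
  by_cases hmem : (a, b) ∈ T
  · have := Finset.card_erase_add_one hmem
    omega
  · rw [← Finset.erase_eq_of_notMem hmem]
    omega

def ins {n : ℕ} (e : Equiv.Perm (Fin n)) (j : Fin (n+1)) : Equiv.Perm (Fin (n+1)) :=
  finSuccEquivLast.trans ((Equiv.optionCongr e).trans (finSuccEquiv' j).symm)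

@[simp] lemma ins_last {n : ℕ} (e : Equiv.Perm (Fin n)) (j : Fin (n+1)) :
    ins e j (Fin.last n) = j := by
  simp [ins]

@[simp] lemma ins_castSucc {n : ℕ} (e : Equiv.Perm (Fin n)) (j : Fin (n+1)) (k : Fin n) :
    ins e j (Fin.castSucc k) = j.succAbove (e k) := by
  simp [ins]

lemma ins_injective2 {n : ℕ} (e e' : Equiv.Perm (Fin n)) (j j' : Fin (n+1))
    (h : ins e j = ins e' j') : e = e' ∧ j = j' := by
  have hj : j = j' := by
    have := congrArg (fun w : Equiv.Perm (Fin (n+1)) => w (Fin.last n)) h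
    simpa using this
  subst hj
  refine ⟨?_, rfl⟩
  ext k
  have := congrArg (fun w : Equiv.Perm (Fin (n+1)) => w (Fin.castSucc k)) h
  simp only [ins_castSucc] at this
  exact congrArg Fin.val (Fin.succAbove_right_injective this)

lemma ins_surjective {n : ℕ} (w : Equiv.Perm (Fin (n+1))) :
    ∃ e : Equiv.Perm (Fin n), ins e (w (Fin.last n)) = w := by
  classical
  set j := w (Fin.last n) with hj
  set E : Option (Fin n) ≃ Option (Fin n) :=
    finSuccEquivLast.symm.trans (w.trans (finSuccEquiv' j)) with hE
  have hEnone : E none = none := by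
    simp [hE, hj]
  refine ⟨Equiv.removeNone E, ?_⟩
  ext x
  refine Fin.lastCases ?_ ?_ x
  · simp [hj]
  · intro k
    have hsome : E (some k) ≠ none := by
      intro h
      have := E.injective (h.trans hEnone.symm)
      simp at this
    obtain ⟨y, hy⟩ := Option.ne_none_iff_exists'.1 hsome
    have h1 : some (Equiv.removeNone E k) = E (some k) :=
      Equiv.removeNone_some E ⟨y, hy⟩
    have h2 : E (some k) = finSuccEquiv' j (w (Fin.castSucc k)) := by
      simp [hE]
    have h3 : j.succAbove (E.removeNone k) = w (Fin.castSucc k) := by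
      have := congrArg (finSuccEquiv' j).symm (h1.trans h2)
      simpa using this
    simp [h3]

lemma lt_succAbove' {n : ℕ} {j : Fin (n+1)} {m : Fin n} (h : (j : ℕ) ≤ (m : ℕ)) :
    j < j.succAbove m := by
  have hle : j ≤ Fin.castSucc m := by rwa [Fin.le_def]
  rw [Fin.succAbove_of_le_castSucc _ _ hle]
  exact lt_of_le_of_lt hle Fin.castSucc_lt_succ

lemma invCount_ins_ge {n : ℕ} (e : Equiv.Perm (Fin n)) (j : Fin (n+1)) :
    invCount n e + (n - (j : ℕ)) ≤ invCount (n+1) (ins e j) := by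
  classical
  set S := Finset.univ.filter
    (fun p : Fin (n+1) × Fin (n+1) => p.1 < p.2 ∧ ins e j p.2 < ins e j p.1) with hS
  set A := (Finset.univ.filter
      (fun p : Fin n × Fin n => p.1 < p.2 ∧ e p.2 < e p.1)).image
    (fun p => (Fin.castSucc p.1, Fin.castSucc p.2)) with hA
  set B := (Finset.univ.filter (fun k : Fin n => (j : ℕ) ≤ (e k : ℕ))).image
    (fun k => (Fin.castSucc k, Fin.last n)) with hB
  have hAS : A ⊆ S := by
    intro p hp
    rw [hA, Finset.mem_image] at hp
    obtain ⟨⟨x, y⟩, hxy, rfl⟩ := hp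
    simp only [mem_filter, mem_univ, true_and] at hxy
    simp only [hS, mem_filter, mem_univ, true_and, ins_castSucc,
      Fin.castSucc_lt_castSucc_iff, Fin.succAbove_lt_succAbove_iff]
    exact hxy
  have hBS : B ⊆ S := by
    intro p hp
    rw [hB, Finset.mem_image] at hp
    obtain ⟨k, hk, rfl⟩ := hp
    simp only [mem_filter, mem_univ, true_and] at hk
    simp only [hS, mem_filter, mem_univ, true_and, ins_castSucc, ins_last]
    exact ⟨Fin.castSucc_lt_last k, lt_succAbove' hk⟩
  have hdisj : Disjoint A B := by
    rw [Finset.disjoint_left]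
    intro p hpA hpB
    rw [hA, Finset.mem_image] at hpA
    rw [hB, Finset.mem_image] at hpB
    obtain ⟨⟨x, y⟩, _, rfl⟩ := hpA
    obtain ⟨k, _, hk⟩ := hpB
    have h2 := congrArg Prod.snd hk
    simp only at h2
    exact (Fin.castSucc_lt_last y).ne' h2
  have hcardA : A.card = invCount n e := by
    rw [hA]
    apply Finset.card_image_of_injective
    intro p p' h
    simp only [Prod.mk.injEq, Fin.castSucc_inj] at h
    exact Prod.ext h.1 h.2
  have hcardB : B.card = n - (j : ℕ) := by
    rw [hB, Finset.card_image_of_injective]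
    · have h1 : (Finset.univ.filter (fun k : Fin n => (j : ℕ) ≤ (e k : ℕ))).card
          = (Finset.univ.filter (fun m : Fin n => (j : ℕ) ≤ (m : ℕ))).card := by
        apply Finset.card_bij (fun k _ => e k)
        · intro k hk; simp only [mem_filter, mem_univ, true_and] at hk ⊢; exact hk
        · intro k _ k' _ h; exact e.injective h
        · intro m hm
          simp only [mem_filter, mem_univ, true_and] at hm
          exact ⟨e⁻¹ m, by simp [hm], by simp⟩
      rw [h1]
      have h2 : (Finset.univ.filter (fun m : Fin n => (j : ℕ) ≤ (m : ℕ))).card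
          = (Finset.Ico (j : ℕ) n).card := by
        apply Finset.card_nbij Fin.val
        · intro m hm
          simp only [mem_coe, mem_filter, mem_univ, true_and] at hm
          exact Finset.mem_Ico.2 ⟨hm, m.2⟩
        · intro m _ m' _ h; exact Fin.ext h
        · intro t ht
          simp only [coe_Ico, Set.mem_Ico] at ht
          exact ⟨⟨t, ht.2⟩, by simp [ht.1], rfl⟩
      rw [h2, Nat.card_Ico]
    · intro k k' h
      have := congrArg Prod.fst h
      exact Fin.castSucc_inj.mp this
  calc invCount n e + (n - (j : ℕ)) = A.card + B.card := by rw [hcardA, hcardB]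
    _ = (A ∪ B).card := (Finset.card_union_of_disjoint hdisj).symm
    _ ≤ S.card := Finset.card_le_card (Finset.union_subset hAS hBS)
    _ = invCount (n+1) (ins e j) := rfl

section
variable {q : ℝ}

lemma qFactorial_pos (hq0 : 0 < q) (m : ℕ) : 0 < qFactorial q m := by
  apply Finset.prod_pos
  intro i hi
  rw [Finset.mem_Icc] at hi
  apply Finset.sum_pos (fun t _ => pow_pos hq0 t)
  exact Finset.nonempty_range_iff.2 (by omega)

lemma geom_sum_eq_fin (m : ℕ) :
    (∑ j : Fin (m+1), q ^ (m - (j : ℕ))) = ∑ t ∈ Finset.range (m+1), q ^ t := by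
  apply Finset.sum_nbij' (fun j : Fin (m+1) => m - (j : ℕ))
    (fun t => (⟨m - t, by omega⟩ : Fin (m+1)))
  · intro j _; exact Finset.mem_range.2 (by omega)
  · intro t _; exact Finset.mem_univ _
  · intro j _
    apply Fin.ext
    simp only []
    omega
  · intro t ht
    rw [Finset.mem_range] at ht
    simp only []
    omega
  · intro j _; rfl

lemma sum_pow_le_qFactorial (hq0 : 0 < q) (hq1 : q ≤ 1) : ∀ m : ℕ,
    (∑ w : Equiv.Perm (Fin m), q ^ invCount m w) ≤ qFactorial q m := by
  intro m
  induction m with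
  | zero =>
    have h1 : ∀ w : Equiv.Perm (Fin 0), invCount 0 w = 0 := by
      intro w
      simp [invCount]
    rw [Finset.sum_congr rfl (fun w _ => by rw [h1 w, pow_zero])]
    rw [Finset.sum_const, Finset.card_univ, Fintype.card_perm]
    simp [qFactorial]
  | succ m ih =>
    have hbij : (∑ w : Equiv.Perm (Fin (m+1)), q ^ invCount (m+1) w)
        = ∑ p : Equiv.Perm (Fin m) × Fin (m+1), q ^ invCount (m+1) (ins p.1 p.2) := by
      symm
      apply Fintype.sum_bijective (fun p : Equiv.Perm (Fin m) × Fin (m+1) => ins p.1 p.2)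
      · constructor
        · intro p p' h
          obtain ⟨h1, h2⟩ := ins_injective2 _ _ _ _ h
          exact Prod.ext h1 h2
        · intro w
          obtain ⟨e, he⟩ := ins_surjective w
          exact ⟨(e, w (Fin.last m)), he⟩
      · intro p; rfl
    rw [hbij]
    have hterm : ∀ p : Equiv.Perm (Fin m) × Fin (m+1),
        q ^ invCount (m+1) (ins p.1 p.2) ≤ q ^ invCount m p.1 * q ^ (m - (p.2 : ℕ)) := by
      intro p
      rw [← pow_add]
      exact pow_le_pow_of_le_one hq0.le hq1 (invCount_ins_ge p.1 p.2)
    calc (∑ p : Equiv.Perm (Fin m) × Fin (m+1), q ^ invCount (m+1) (ins p.1 p.2))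
        ≤ ∑ p : Equiv.Perm (Fin m) × Fin (m+1), q ^ invCount m p.1 * q ^ (m - (p.2 : ℕ)) :=
          Finset.sum_le_sum (fun p _ => hterm p)
      _ = (∑ e : Equiv.Perm (Fin m), q ^ invCount m e) * (∑ j : Fin (m+1), q ^ (m - (j : ℕ))) := by
          rw [Finset.sum_mul_sum, Fintype.sum_prod_type]
      _ ≤ qFactorial q m * (∑ t ∈ Finset.range (m+1), q ^ t) := by
          rw [geom_sum_eq_fin]
          apply mul_le_mul_of_nonneg_right ih
          exact Finset.sum_nonneg (fun t _ => pow_nonneg hq0.le t)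
      _ = qFactorial q (m+1) := by
          rw [qFactorial, qFactorial, Finset.prod_Icc_succ_top (by omega)]

/-- the fiber over the last position -/
lemma sum_last_le (hq0 : 0 < q) (hq1 : q ≤ 1) (m : ℕ) (j : Fin (m+1)) :
    (∑ w ∈ Finset.univ.filter
      (fun w : Equiv.Perm (Fin (m+1)) => w (Fin.last m) = j), q ^ invCount (m+1) w)
    ≤ q ^ (m - (j : ℕ)) * qFactorial q m := by
  have hsum : (∑ w ∈ Finset.univ.filter
      (fun w : Equiv.Perm (Fin (m+1)) => w (Fin.last m) = j), q ^ invCount (m+1) w)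
      = ∑ e : Equiv.Perm (Fin m), q ^ invCount (m+1) (ins e j) := by
    symm
    apply Finset.sum_nbij (fun e => ins e j)
    · intro e _
      simp only [Finset.mem_filter, Finset.mem_univ, true_and]
      exact ins_last e j
    · intro e _ e' _ h
      exact (ins_injective2 _ _ _ _ h).1
    · intro w hw
      simp only [Finset.coe_filter, Set.mem_setOf_eq, Finset.mem_univ, true_and] at hw
      obtain ⟨e, he⟩ := ins_surjective w
      rw [hw] at he
      exact ⟨e, Finset.mem_coe.2 (Finset.mem_univ _), he⟩
    · intro e _; rfl
  rw [hsum]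
  calc (∑ e : Equiv.Perm (Fin m), q ^ invCount (m+1) (ins e j))
      ≤ ∑ e : Equiv.Perm (Fin m), q ^ (m - (j : ℕ)) * q ^ invCount m e := by
        apply Finset.sum_le_sum
        intro e _
        rw [← pow_add]
        apply pow_le_pow_of_le_one hq0.le hq1
        have := invCount_ins_ge e j
        omega
    _ = q ^ (m - (j : ℕ)) * ∑ e : Equiv.Perm (Fin m), q ^ invCount m e := by
        rw [Finset.mul_sum]
    _ ≤ q ^ (m - (j : ℕ)) * qFactorial q m := by
        apply mul_le_mul_of_nonneg_left (sum_pow_le_qFactorial hq0 hq1 m)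
        exact pow_nonneg hq0.le _

end
noncomputable def fib (q : ℝ) (n : ℕ) (i j : Fin n) : ℝ :=
  ∑ w ∈ Finset.univ.filter (fun w : Equiv.Perm (Fin n) => w i = j), q ^ invCount n w

section
variable {q : ℝ}

lemma fib_nonneg (hq0 : 0 < q) (n : ℕ) (i j : Fin n) : 0 ≤ fib q n i j :=
  Finset.sum_nonneg (fun w _ => pow_nonneg hq0.le _)

lemma fib_symm (n : ℕ) (i j : Fin n) : fib q n i j = fib q n j i := by
  unfold fib
  apply Finset.sum_nbij (fun w => w⁻¹)
  · intro w hw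
    simp only [Finset.mem_filter, Finset.mem_univ, true_and] at hw ⊢
    rw [← hw]; simp
  · intro w _ w' _ h
    exact inv_injective h
  · intro v hv
    simp only [Finset.coe_filter, Set.mem_setOf_eq, Finset.mem_univ, true_and] at hv
    refine ⟨v⁻¹, ?_, by simp⟩
    simp only [Finset.mem_coe, Finset.mem_filter, Finset.mem_univ, true_and]
    rw [← hv]; simp
  · intro w _
    rw [invCount_inv]

lemma fib_step (hq0 : 0 < q) (hq1 : q ≤ 1) (n : ℕ) (i i' j : Fin n)
    (h : (i' : ℕ) = (i : ℕ) + 1) : q * fib q n i j ≤ fib q n i' j := by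
  have hswap : fib q n i' j
      = ∑ w ∈ Finset.univ.filter (fun w : Equiv.Perm (Fin n) => w i = j),
          q ^ invCount n (w * Equiv.swap i i') := by
    unfold fib
    symm
    apply Finset.sum_nbij (fun w => w * Equiv.swap i i')
    · intro w hw
      simp only [Finset.mem_filter, Finset.mem_univ, true_and] at hw ⊢
      rw [Equiv.Perm.mul_apply, Equiv.swap_apply_right, hw]
    · intro w _ w' _ hww
      exact mul_right_cancel hww
    · intro v hv
      simp only [Finset.coe_filter, Set.mem_setOf_eq, Finset.mem_univ, true_and] at hv
      refine ⟨v * Equiv.swap i i', ?_, ?_⟩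
      · simp only [Finset.mem_coe, Finset.mem_filter, Finset.mem_univ, true_and]
        rw [Equiv.Perm.mul_apply, Equiv.swap_apply_left, hv]
      · show v * Equiv.swap i i' * Equiv.swap i i' = v
        rw [mul_assoc, Equiv.swap_mul_self, mul_one]
    · intro w _; rfl
  rw [hswap, fib, Finset.mul_sum]
  apply Finset.sum_le_sum
  intro w _
  have hle := invCount_mul_swap_le n w i i' h
  calc q * q ^ invCount n w = q ^ (invCount n w + 1) := by ring
    _ ≤ q ^ invCount n (w * Equiv.swap i i') := pow_le_pow_of_le_one hq0.le hq1 hle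

lemma fib_chain (hq0 : 0 < q) (hq1 : q ≤ 1) (m : ℕ) (j : Fin (m+1)) :
    ∀ k (i : Fin (m+1)), (i : ℕ) + k = m →
      q ^ k * fib q (m+1) i j ≤ fib q (m+1) (Fin.last m) j := by
  intro k
  induction k with
  | zero =>
    intro i hi
    have : i = Fin.last m := Fin.ext (by simpa using hi)
    subst this
    simp
  | succ k ihk =>
    intro i hi
    set i' : Fin (m+1) := ⟨(i : ℕ) + 1, by omega⟩ with hi'
    calc q ^ (k+1) * fib q (m+1) i j = q ^ k * (q * fib q (m+1) i j) := by ring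
      _ ≤ q ^ k * fib q (m+1) i' j := by
          apply mul_le_mul_of_nonneg_left _ (pow_nonneg hq0.le k)
          exact fib_step hq0 hq1 (m+1) i i' j rfl
      _ ≤ fib q (m+1) (Fin.last m) j := ihk i' (by simp [hi']; omega)

lemma fib_le_of_le (hq0 : 0 < q) (hq1 : q ≤ 1) (m : ℕ) (i j : Fin (m+1))
    (hji : (j : ℕ) ≤ (i : ℕ)) :
    fib q (m+1) i j ≤ q ^ ((i : ℕ) - (j : ℕ)) * qFactorial q m := by
  have hc := fib_chain hq0 hq1 m j (m - (i : ℕ)) i (by omega)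
  have hl : fib q (m+1) (Fin.last m) j ≤ q ^ (m - (j : ℕ)) * qFactorial q m :=
    sum_last_le hq0 hq1 m j
  have h2 : q ^ (m - (i : ℕ)) * fib q (m+1) i j
      ≤ q ^ (m - (i : ℕ)) * (q ^ ((i : ℕ) - (j : ℕ)) * qFactorial q m) := by
    calc q ^ (m - (i : ℕ)) * fib q (m+1) i j ≤ q ^ (m - (j : ℕ)) * qFactorial q m :=
          hc.trans hl
      _ = q ^ (m - (i : ℕ)) * (q ^ ((i : ℕ) - (j : ℕ)) * qFactorial q m) := by
          rw [← mul_assoc, ← pow_add]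
          congr 2
          have := i.2
          omega
  exact le_of_mul_le_mul_left h2 (pow_pos hq0 _)

lemma fib_le (hq0 : 0 < q) (hq1 : q ≤ 1) (m : ℕ) (i j : Fin (m+1)) :
    fib q (m+1) i j
      ≤ q ^ (if (j : ℕ) < (i : ℕ) then (i : ℕ) - (j : ℕ) else (j : ℕ) - (i : ℕ))
        * qFactorial q m := by
  by_cases h : (j : ℕ) < (i : ℕ)
  · rw [if_pos h]
    exact fib_le_of_le hq0 hq1 m i j h.le
  · rw [if_neg h]
    rw [fib_symm]
    exact fib_le_of_le hq0 hq1 m j i (by omega)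

end
end Stmt17

open Finset Stmt17 in
/-- For `w` Mallows distributed on `S_n` with parameter `0 < q ≤ 1` and any
index `i`, `P(|w(i) - i| > 1) ≤ 2 q²`. -/
theorem stmt_17 (n : ℕ) (q : ℝ) (hq0 : 0 < q) (hq1 : q ≤ 1) (i : Fin n) :
    ∑ w ∈ Finset.univ.filter
        (fun w : Equiv.Perm (Fin n) => 1 < |((w i : ℕ) : ℤ) - ((i : ℕ) : ℤ)|),
      mallows q n w ≤ 2 * q ^ 2 := by
  match n, i with
  | m + 1, i =>
  classical
  set C := qFactorial q m with hC
  set D := qFactorial q (m+1) with hD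
  set R := ∑ t ∈ Finset.range (m+1), q ^ t with hR
  have hCpos : 0 < C := Stmt17.qFactorial_pos hq0 m
  have hDpos : 0 < D := Stmt17.qFactorial_pos hq0 (m+1)
  have hRnn : 0 ≤ R := Finset.sum_nonneg (fun t _ => pow_nonneg hq0.le t)
  have hDCR : D = C * R := by
    rw [hD, hC, hR, qFactorial, qFactorial, Finset.prod_Icc_succ_top (by omega)]
  set bad := Finset.univ.filter
    (fun w : Equiv.Perm (Fin (m+1)) => 1 < |((w i : ℕ) : ℤ) - ((i : ℕ) : ℤ)|) with hbad
  set badJ := Finset.univ.filter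
    (fun j : Fin (m+1) => 1 < |((j : ℕ) : ℤ) - ((i : ℕ) : ℤ)|) with hbadJ
  -- group the sum by the value of w i
  have hmaps : ∀ w ∈ bad, w i ∈ badJ := by
    intro w hw
    simp only [hbad, Finset.mem_filter, Finset.mem_univ, true_and] at hw
    simp only [hbadJ, Finset.mem_filter, Finset.mem_univ, true_and]
    exact hw
  have hgroup : (∑ w ∈ bad, q ^ invCount (m+1) w)
      = ∑ j ∈ badJ, fib q (m+1) i j := by
    rw [← Finset.sum_fiberwise_of_maps_to hmaps (fun w => q ^ invCount (m+1) w)]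
    apply Finset.sum_congr rfl
    intro j hj
    simp only [hbadJ, Finset.mem_filter, Finset.mem_univ, true_and] at hj
    unfold fib
    congr 1
    ext w
    simp only [hbad, Finset.filter_filter, Finset.mem_filter, Finset.mem_univ, true_and]
    constructor
    · exact fun h => h.2
    · intro h
      exact ⟨by rw [h]; exact hj, h⟩
  -- bound the geometric sums
  have hkey : (∑ j ∈ badJ, q ^ (if (j : ℕ) < (i : ℕ) then (i : ℕ) - (j : ℕ)
      else (j : ℕ) - (i : ℕ))) ≤ 2 * q ^ 2 * R := by
    rw [← Finset.sum_filter_add_sum_filter_not badJ (fun (j : Fin (m+1)) => (j : ℕ) < (i : ℕ))]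
    set L := badJ.filter (fun (j : Fin (m+1)) => (j : ℕ) < (i : ℕ)) with hL
    set H := badJ.filter (fun (j : Fin (m+1)) => ¬ (j : ℕ) < (i : ℕ)) with hH
    have hLmem : ∀ j ∈ L, (j : ℕ) + 2 ≤ (i : ℕ) := by
      intro j hj
      simp only [hL, hbadJ, Finset.mem_filter, Finset.mem_univ, true_and] at hj
      have h1 := hj.1
      rw [lt_abs] at h1
      omega
    have hHmem : ∀ j ∈ H, (i : ℕ) + 2 ≤ (j : ℕ) := by
      intro j hj
      simp only [hH, hbadJ, Finset.mem_filter, Finset.mem_univ, true_and] at hj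
      have h1 := hj.1
      rw [lt_abs] at h1
      omega
    have hLsum : (∑ j ∈ L, q ^ (if (j : ℕ) < (i : ℕ) then (i : ℕ) - (j : ℕ)
        else (j : ℕ) - (i : ℕ))) ≤ q ^ 2 * R := by
      have e1 : ∀ j ∈ L, q ^ (if (j : ℕ) < (i : ℕ) then (i : ℕ) - (j : ℕ)
          else (j : ℕ) - (i : ℕ)) = q ^ 2 * q ^ ((i : ℕ) - (j : ℕ) - 2) := by
        intro j hj
        have := hLmem j hj
        rw [if_pos (by omega), ← pow_add]
        congr 1
        omega
      rw [Finset.sum_congr rfl e1, ← Finset.mul_sum]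
      apply mul_le_mul_of_nonneg_left _ (by positivity)
      have e2 : (∑ j ∈ L, q ^ ((i : ℕ) - (j : ℕ) - 2))
          = ∑ t ∈ L.image (fun (j : Fin (m+1)) => (i : ℕ) - (j : ℕ) - 2), q ^ t := by
        rw [Finset.sum_image]
        intro x hx y hy hxy
        have := hLmem x hx
        have := hLmem y hy
        exact Fin.ext (by simp only at hxy; omega)
      rw [e2, hR]
      apply Finset.sum_le_sum_of_subset_of_nonneg
      · intro t ht
        rw [Finset.mem_image] at ht
        obtain ⟨j, hj, rfl⟩ := ht
        have := i.2
        exact Finset.mem_range.2 (by omega)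
      · intro t _ _
        exact pow_nonneg hq0.le t
    have hHsum : (∑ j ∈ H, q ^ (if (j : ℕ) < (i : ℕ) then (i : ℕ) - (j : ℕ)
        else (j : ℕ) - (i : ℕ))) ≤ q ^ 2 * R := by
      have e1 : ∀ j ∈ H, q ^ (if (j : ℕ) < (i : ℕ) then (i : ℕ) - (j : ℕ)
          else (j : ℕ) - (i : ℕ)) = q ^ 2 * q ^ ((j : ℕ) - (i : ℕ) - 2) := by
        intro j hj
        have := hHmem j hj
        rw [if_neg (by omega), ← pow_add]
        congr 1
        omega
      rw [Finset.sum_congr rfl e1, ← Finset.mul_sum]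
      apply mul_le_mul_of_nonneg_left _ (by positivity)
      have e2 : (∑ j ∈ H, q ^ ((j : ℕ) - (i : ℕ) - 2))
          = ∑ t ∈ H.image (fun (j : Fin (m+1)) => (j : ℕ) - (i : ℕ) - 2), q ^ t := by
        rw [Finset.sum_image]
        intro x hx y hy hxy
        have := hHmem x hx
        have := hHmem y hy
        exact Fin.ext (by simp only at hxy; omega)
      rw [e2, hR]
      apply Finset.sum_le_sum_of_subset_of_nonneg
      · intro t ht
        rw [Finset.mem_image] at ht
        obtain ⟨j, hj, rfl⟩ := ht
        have := j.2
        exact Finset.mem_range.2 (by omega)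
      · intro t _ _
        exact pow_nonneg hq0.le t
    linarith
  -- put everything together
  have hmain : (∑ w ∈ bad, q ^ invCount (m+1) w) ≤ 2 * q ^ 2 * D := by
    rw [hgroup]
    calc (∑ j ∈ badJ, fib q (m+1) i j)
        ≤ ∑ j ∈ badJ, q ^ (if (j : ℕ) < (i : ℕ) then (i : ℕ) - (j : ℕ)
            else (j : ℕ) - (i : ℕ)) * C :=
          Finset.sum_le_sum (fun j _ => Stmt17.fib_le hq0 hq1 m i j)
      _ = (∑ j ∈ badJ, q ^ (if (j : ℕ) < (i : ℕ) then (i : ℕ) - (j : ℕ)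
            else (j : ℕ) - (i : ℕ))) * C := by rw [Finset.sum_mul]
      _ ≤ (2 * q ^ 2 * R) * C := mul_le_mul_of_nonneg_right hkey hCpos.le
      _ = 2 * q ^ 2 * D := by rw [hDCR]; ring
  have hfinal : (∑ w ∈ bad, mallows q (m+1) w) = (∑ w ∈ bad, q ^ invCount (m+1) w) / D := by
    rw [Finset.sum_div]
    apply Finset.sum_congr rfl
    intro w _
    rfl
  rw [hfinal, div_le_iff₀ hDpos]
  calc (∑ w ∈ bad, q ^ invCount (m+1) w) ≤ 2 * q ^ 2 * D := hmain
    _ = 2 * q ^ 2 * D := rfl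
end
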